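/- (Lemma on nonautonomous solvability) Let F(n) = f_m(n)T^m + … be a Laurent series in T^{-1} with coefficients that are sequences (elements of the ring of sequences of functions), with m ≥ 1 and f_m(n) ≠ 0 for all n. Then for any degree k and any prescribed initial data G(0), G(1), …, G(m−1), there exists a unique series G(n) = g_k(n)T^k + … with sequence coefficients satisfying D_t(G) = [F,G] and the given initial conditions. The key step: the coefficient equation in order T^{j+m} has the form f_m(n)·g_j(n+m) − f_m(n+j)·g_j(n) = (known terms), which determines g_j(n) for all n ∈ ℤ uniquely from the values g_j(0),…,g_j(m−1). -/

import Mathlib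

namespace NALax

variable {K : Type*} [Field K]

/-- Forward iteration of an indexed step function. -/
def fwdSeq (s : ℤ → K → K) (x : K) : ℕ → K
  | 0 => x
  | n + 1 => s n (fwdSeq s x n)

/-- Backward iteration: value at `-(n+1)` computed from value at `-n`. -/
def bwdSeq (s : ℤ → K → K) (x : K) : ℕ → K
  | 0 => x
  | n + 1 => s (-(n : ℤ) - 1) (bwdSeq s x n)

/-- Two-sided solution of `p (q+1) = sf q (p q)`, `p 0 = x`. -/
def solveZ (sf sb : ℤ → K → K) (x : K) (q : ℤ) : K :=
  if 0 ≤ q then fwdSeq sf x q.toNat else bwdSeq sb x (-q).toNat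

lemma solveZ_zero (sf sb : ℤ → K → K) (x : K) : solveZ sf sb x 0 = x := by
  simp [solveZ, fwdSeq]

lemma solveZ_succ (sf sb : ℤ → K → K) (hinv : ∀ q y, sf q (sb q y) = y) (x : K) (q : ℤ) :
    solveZ sf sb x (q + 1) = sf q (solveZ sf sb x q) := by
  unfold solveZ
  rcases lt_trichotomy q (-1) with h | h | h
  · rw [if_neg (by omega), if_neg (by omega)]
    have h3 : (-q).toNat = (-(q + 1)).toNat + 1 := by omega
    rw [h3, bwdSeq]
    have h4 : (-((-(q + 1)).toNat : ℤ) - 1) = q := by omega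
    rw [h4, hinv]
  · subst h
    norm_num [bwdSeq, fwdSeq, hinv]
  · rw [if_pos (by omega), if_pos (by omega)]
    have h3 : (q + 1).toNat = q.toNat + 1 := by omega
    rw [h3, fwdSeq]
    have h4 : ((q.toNat : ℤ)) = q := by omega
    rw [h4]

/-- Uniqueness of two-sided orbits of an invertible step. -/
lemma stepFun_unique (sf sb : ℤ → K → K) (hinv : ∀ q y, sb q (sf q y) = y)
    (p p' : ℤ → K) (h0 : p 0 = p' 0)
    (hs : ∀ q, p (q + 1) = sf q (p q)) (hs' : ∀ q, p' (q + 1) = sf q (p' q)) :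
    p = p' := by
  have hbk : ∀ q, p q = sb q (p (q + 1)) := fun q => by rw [hs q, hinv]
  have hbk' : ∀ q, p' q = sb q (p' (q + 1)) := fun q => by rw [hs' q, hinv]
  have key : ∀ n : ℕ, p n = p' n ∧ p (-(n : ℤ)) = p' (-(n : ℤ)) := by
    intro n
    induction n with
    | zero => exact ⟨by simpa using h0, by simpa using h0⟩
    | succ n ih =>
      refine ⟨?_, ?_⟩
      · have e : ((n + 1 : ℕ) : ℤ) = (n : ℤ) + 1 := by push_cast; ring
        rw [e, hs, hs', ih.1]
      · have e : (-((n + 1 : ℕ) : ℤ)) = (-(n : ℤ) - 1) := by push_cast; ring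
        have e2 : (-(n : ℤ) - 1) + 1 = -(n : ℤ) := by ring
        rw [e, hbk (-(n : ℤ) - 1), hbk' (-(n : ℤ) - 1), e2, ih.2]
  funext q
  rcases le_or_gt 0 q with h | h
  · have e : q = ((q.toNat : ℕ) : ℤ) := by omega
    rw [e]; exact (key q.toNat).1
  · have e : q = -(((-q).toNat : ℕ) : ℤ) := by omega
    rw [e]; exact (key (-q).toNat).2

/-- Forward step map for the recurrence `a n * g (n+m) = b n * g n + c n` on the
residue class `r` mod `m`. -/
def sfOf (a b c : ℤ → K) (r m : ℤ) : ℤ → K → K :=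
  fun q y => (c (r + q * m) + b (r + q * m) * y) / a (r + q * m)

/-- Backward step map. -/
def sbOf (a b c : ℤ → K) (r m : ℤ) : ℤ → K → K :=
  fun q z => (a (r + q * m) * z - c (r + q * m)) / b (r + q * m)

lemma sf_sb (a b c : ℤ → K) (ha : ∀ n, a n ≠ 0) (hb : ∀ n, b n ≠ 0) (r m q : ℤ) (y : K) :
    sfOf a b c r m q (sbOf a b c r m q y) = y := by
  have h1 := ha (r + q * m)
  have h2 := hb (r + q * m)
  unfold sfOf sbOf
  field_simp
  ring

lemma sb_sf (a b c : ℤ → K) (ha : ∀ n, a n ≠ 0) (hb : ∀ n, b n ≠ 0) (r m q : ℤ) (y : K) :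
    sbOf a b c r m q (sfOf a b c r m q y) = y := by
  have h1 := ha (r + q * m)
  have h2 := hb (r + q * m)
  unfold sfOf sbOf
  field_simp
  ring

/-- Solution of the two-sided recurrence `a n * g (n+m) = b n * g n + c n`
with prescribed values `w` on `[0, m)`. -/
def oneDsol (a b c : ℤ → K) (m : ℤ) (w : ℤ → K) : ℤ → K := fun n =>
  solveZ (sfOf a b c (n % m) m) (sbOf a b c (n % m) m) (w (n % m)) (n / m)

lemma oneDsol_init (a b c : ℤ → K) (m : ℤ) (w : ℤ → K) (n : ℤ)
    (h0 : 0 ≤ n) (h1 : n < m) : oneDsol a b c m w n = w n := by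
  unfold oneDsol
  rw [Int.emod_eq_of_lt h0 h1, Int.ediv_eq_zero_of_lt h0 h1, solveZ_zero]

lemma stepOf (a b c : ℤ → K) (m : ℤ) (ha : ∀ n, a n ≠ 0) (g : ℤ → K)
    (hrec : ∀ n, a n * g (n + m) = b n * g n + c n) (r q : ℤ) :
    g (r + (q + 1) * m) = sfOf a b c r m q (g (r + q * m)) := by
  have h := hrec (r + q * m)
  unfold sfOf
  rw [eq_div_iff (ha (r + q * m))]
  have e : r + q * m + m = r + (q + 1) * m := by ring
  rw [e] at h
  linear_combination h

lemma oneDsol_rec (a b c : ℤ → K) (m : ℤ) (w : ℤ → K) (hm : 1 ≤ m)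
    (ha : ∀ n, a n ≠ 0) (hb : ∀ n, b n ≠ 0) (n : ℤ) :
    a n * oneDsol a b c m w (n + m) = b n * oneDsol a b c m w n + c n := by
  have hm0 : m ≠ 0 := by omega
  have h1 : (n + m) % m = n % m := by
    rw [show n + m = n + 1 * m from by ring, Int.add_mul_emod_self_right]
  have h2 : (n + m) / m = n / m + 1 := by
    rw [show n + m = n + 1 * m from by ring, Int.add_mul_ediv_right _ _ hm0]
  have h3 : n % m + n / m * m = n := Int.emod_add_ediv_mul n m
  simp only [oneDsol]
  rw [h1, h2, solveZ_succ (sfOf a b c (n % m) m) (sbOf a b c (n % m) m)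
    (fun q y => sf_sb a b c ha hb (n % m) m q y) (w (n % m)) (n / m)]
  simp only [sfOf]
  rw [h3]
  rw [mul_comm (a n), div_mul_cancel₀ _ (ha n)]
  ring

lemma oneDsol_unique (a b c : ℤ → K) (m : ℤ) (w : ℤ → K) (hm : 1 ≤ m)
    (ha : ∀ n, a n ≠ 0) (hb : ∀ n, b n ≠ 0) (g : ℤ → K)
    (hinit : ∀ n, 0 ≤ n → n < m → g n = w n)
    (hrec : ∀ n, a n * g (n + m) = b n * g n + c n) :
    g = oneDsol a b c m w := by
  have hm0 : (0 : ℤ) < m := by omega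
  funext n
  have hr0 : 0 ≤ n % m := Int.emod_nonneg n (by omega)
  have hr1 : n % m < m := Int.emod_lt_of_pos n hm0
  have key := stepFun_unique (sfOf a b c (n % m) m) (sbOf a b c (n % m) m)
      (fun q y => sb_sf a b c ha hb (n % m) m q y)
      (fun q => g (n % m + q * m)) (fun q => oneDsol a b c m w (n % m + q * m))
      (by
        simp only [zero_mul, add_zero]
        rw [hinit _ hr0 hr1, oneDsol_init a b c m w _ hr0 hr1])
      (fun q => stepOf a b c m ha g hrec (n % m) q)
      (fun q => stepOf a b c m ha _ (oneDsol_rec a b c m w hm ha hb) (n % m) q)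
  have hn : n % m + n / m * m = n := Int.emod_add_ediv_mul n m
  have := congrFun key (n / m)
  rw [hn] at this
  exact this

/-- The "known part" of the coefficient equation in order `T^{j+m}`:
it only involves coefficients `G j'` with `j' > j`. -/
noncomputable def cfun (Dt : K →+ K) (F : ℤ → ℤ → K) (m k : ℤ) (G : ℤ → ℤ → K) (j n : ℤ) : K :=
  Dt (G (j + m) n) - (∑ i ∈ Finset.Icc (j + m - k) (m - 1), F i n * G (j + m - i) (n + i))
    + ∑ i ∈ Finset.Icc (j + 1) k, G i n * F (j + m - i) (n + i)

lemma cfun_congr (Dt : K →+ K) (F : ℤ → ℤ → K) (m k : ℤ) (hm : 1 ≤ m)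
    (G G' : ℤ → ℤ → K) (j : ℤ) (h : ∀ j', j < j' → G j' = G' j') (n : ℤ) :
    cfun Dt F m k G j n = cfun Dt F m k G' j n := by
  unfold cfun
  have e1 : G (j + m) = G' (j + m) := h _ (by omega)
  have e2 : ∑ i ∈ Finset.Icc (j + m - k) (m - 1), F i n * G (j + m - i) (n + i)
      = ∑ i ∈ Finset.Icc (j + m - k) (m - 1), F i n * G' (j + m - i) (n + i) :=
    Finset.sum_congr rfl (fun i hi => by
      rw [h (j + m - i) (by simp only [Finset.mem_Icc] at hi; omega)])
  have e3 : ∑ i ∈ Finset.Icc (j + 1) k, G i n * F (j + m - i) (n + i)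
      = ∑ i ∈ Finset.Icc (j + 1) k, G' i n * F (j + m - i) (n + i) :=
    Finset.sum_congr rfl (fun i hi => by
      rw [h i (by simp only [Finset.mem_Icc] at hi; omega)])
  rw [e1, e2, e3]

/-- Body of the downward recursion on the coefficient index (`d = k - j`). -/
noncomputable def Hbody (Dt : K →+ K) (F : ℤ → ℤ → K) (m k : ℤ) (v : ℤ → ℤ → K)
    (d : ℕ) (ih : ∀ d' : ℕ, d' < d → ℤ → K) : ℤ → K :=
  oneDsol (fun n => F m n) (fun n => F m (n + (k - (d : ℤ))))
    (cfun Dt F m k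
      (fun j' n => if h : j' ≤ k ∧ (k - j').toNat < d then ih (k - j').toNat h.2 n else 0)
      (k - (d : ℤ)))
    m (v (k - (d : ℤ)))

noncomputable def Hfun (Dt : K →+ K) (F : ℤ → ℤ → K) (m k : ℤ) (v : ℤ → ℤ → K) :
    ℕ → ℤ → K :=
  WellFounded.fix (wellFounded_lt) (Hbody Dt F m k v)

lemma Hfun_eq (Dt : K →+ K) (F : ℤ → ℤ → K) (m k : ℤ) (v : ℤ → ℤ → K) (d : ℕ) :
    Hfun Dt F m k v d = Hbody Dt F m k v d (fun d' _ => Hfun Dt F m k v d') :=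
  WellFounded.fix_eq _ _ _

/-- The constructed solution. -/
noncomputable def Gdef (Dt : K →+ K) (F : ℤ → ℤ → K) (m k : ℤ) (v : ℤ → ℤ → K) :
    ℤ → ℤ → K := fun j n =>
  if j ≤ k then Hfun Dt F m k v (k - j).toNat n else 0

lemma Gdef_eq (Dt : K →+ K) (F : ℤ → ℤ → K) (m k : ℤ) (v : ℤ → ℤ → K)
    (hm : 1 ≤ m) (j : ℤ) (hj : j ≤ k) :
    Gdef Dt F m k v j =
      oneDsol (fun n => F m n) (fun n => F m (n + j))
        (cfun Dt F m k (Gdef Dt F m k v) j) m (v j) := by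
  have h0 : Gdef Dt F m k v j = Hfun Dt F m k v (k - j).toNat := by
    funext n; simp [Gdef, hj]
  rw [h0, Hfun_eq]
  unfold Hbody
  have hkd : (k - ((k - j).toNat : ℤ)) = j := by omega
  rw [hkd]
  have hcc : cfun Dt F m k
      (fun j' n => if h : j' ≤ k ∧ (k - j').toNat < (k - j).toNat
        then Hfun Dt F m k v (k - j').toNat n else 0) j
      = cfun Dt F m k (Gdef Dt F m k v) j := by
    funext n
    refine cfun_congr Dt F m k hm _ _ j ?_ n
    intro j' hj'
    funext n'
    by_cases h' : j' ≤ k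
    · have hlt : (k - j').toNat < (k - j).toNat := by omega
      rw [dif_pos ⟨h', hlt⟩]
      simp [Gdef, h']
    · rw [dif_neg (fun hc => h' hc.1)]
      simp [Gdef, h']
  rw [hcc]

lemma Gdef_zero (Dt : K →+ K) (F : ℤ → ℤ → K) (m k : ℤ) (v : ℤ → ℤ → K)
    (j : ℤ) (hj : k < j) : Gdef Dt F m k v j = 0 := by
  funext n; simp [Gdef, not_le.mpr hj]

lemma Gdef_init (Dt : K →+ K) (F : ℤ → ℤ → K) (m k : ℤ) (v : ℤ → ℤ → K)
    (hm : 1 ≤ m) (j : ℤ) (hj : j ≤ k) (n : ℤ) (h0 : 0 ≤ n) (h1 : n < m) :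
    Gdef Dt F m k v j n = v j n := by
  rw [Gdef_eq Dt F m k v hm j hj]
  exact oneDsol_init _ _ _ _ _ n h0 h1

lemma Gdef_rec (Dt : K →+ K) (F : ℤ → ℤ → K) (m k : ℤ) (v : ℤ → ℤ → K)
    (hm : 1 ≤ m) (hfm : ∀ n, F m n ≠ 0) (j : ℤ) (hj : j ≤ k) (n : ℤ) :
    F m n * Gdef Dt F m k v j (n + m) =
      F m (n + j) * Gdef Dt F m k v j n + cfun Dt F m k (Gdef Dt F m k v) j n := by
  have h := oneDsol_rec (fun n => F m n) (fun n' => F m (n' + j))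
    (cfun Dt F m k (Gdef Dt F m k v) j) m (v j) hm (fun n' => hfm n')
    (fun n' => hfm (n' + j)) n
  rw [Gdef_eq Dt F m k v hm j hj]
  exact h

/-- The coefficient equation at order `l` is equivalent to the normalized
recurrence for `g_{l-m}`, when `l - m ≤ k`. -/
lemma split_eq (Dt : K →+ K) (F G : ℤ → ℤ → K) (m k : ℤ) (hm : 1 ≤ m)
    (l : ℤ) (hl : l ≤ k + m) (n : ℤ) :
    (Dt (G l n) =
      (∑ i ∈ Finset.Icc (l - k) m, F i n * G (l - i) (n + i)) -
      (∑ i ∈ Finset.Icc (l - m) k, G i n * F (l - i) (n + i)))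
    ↔ (F m n * G (l - m) (n + m) =
        F m (n + (l - m)) * G (l - m) n + cfun Dt F m k G (l - m) n) := by
  have hset1 : Finset.Icc (l - k) m = insert m (Finset.Icc (l - k) (m - 1)) := by
    ext x; simp only [Finset.mem_Icc, Finset.mem_insert]; omega
  have hnm1 : m ∉ Finset.Icc (l - k) (m - 1) := by
    simp only [Finset.mem_Icc]; omega
  have hset2 : Finset.Icc (l - m) k = insert (l - m) (Finset.Icc (l - m + 1) k) := by
    ext x; simp only [Finset.mem_Icc, Finset.mem_insert]; omega
  have hnm2 : l - m ∉ Finset.Icc (l - m + 1) k := by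
    simp only [Finset.mem_Icc]; omega
  rw [hset1, hset2, Finset.sum_insert hnm1, Finset.sum_insert hnm2]
  unfold cfun
  simp only [show l - m + m = l from by ring, show l - (l - m) = m from by ring]
  constructor <;> intro h <;> linear_combination -h

end NALax

open NALax in
/-- Lemma on nonautonomous solvability: Laurent series in `T^{-1}`
with coefficients which are sequences `ℤ → K`; a series `∑_{j ≤ k} g_j(n) T^j`
is represented by `G : ℤ → ℤ → K` (coefficient index `j`, sequence index `n`)
with `G j = 0` for `j > k`.  The shift acts by `T^i(g)(n) = g(n+i)`, so the
`T^l`-coefficient of the Lax equation `D_t(G) = [F,G]` reads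
`D_t(G l n) = ∑_i F i n · G (l-i) (n+i) − ∑_i G i n · F (l-i) (n+i)`
(all sums finite since both series have degrees bounded above by `m`, `k`).
Given `F = f_m T^m + …` with `m ≥ 1`, `f_m(n) ≠ 0` for all `n`, any degree
`k` and prescribed initial data (the values of every coefficient sequence at
`n = 0, …, m-1`), there is a unique solution. -/
theorem nonautonomous_Lax_solvability
    {K : Type*} [Field K] (Dt : K →+ K)
    (hLeib : ∀ a b : K, Dt (a * b) = Dt a * b + a * Dt b)
    (m : ℤ) (hm : 1 ≤ m) (k : ℤ)
    (F : ℤ → ℤ → K)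
    (hFdeg : ∀ j : ℤ, m < j → F j = 0)
    (hfm : ∀ n : ℤ, F m n ≠ 0)
    (v : ℤ → ℤ → K) :
    ∃! G : ℤ → ℤ → K,
      (∀ j : ℤ, k < j → G j = 0) ∧
      (∀ j : ℤ, j ≤ k → ∀ n : ℤ, 0 ≤ n → n < m → G j n = v j n) ∧
      (∀ l n : ℤ,
        Dt (G l n) =
          (∑ i ∈ Finset.Icc (l - k) m, F i n * G (l - i) (n + i)) -
          (∑ i ∈ Finset.Icc (l - m) k, G i n * F (l - i) (n + i))) := by
  refine ⟨Gdef Dt F m k v, ⟨?_, ?_, ?_⟩, ?_⟩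
  · exact fun j hj => Gdef_zero Dt F m k v j hj
  · exact fun j hj n h0 h1 => Gdef_init Dt F m k v hm j hj n h0 h1
  · intro l n
    by_cases hl : l ≤ k + m
    · exact (split_eq Dt F (Gdef Dt F m k v) m k hm l hl n).mpr
        (Gdef_rec Dt F m k v hm hfm (l - m) (by omega) n)
    · rw [Gdef_zero Dt F m k v l (by omega)]
      simp only [Pi.zero_apply, map_zero]
      rw [Finset.Icc_eq_empty (show ¬ l - m ≤ k by omega), Finset.sum_empty, sub_zero]
      symm
      apply Finset.sum_eq_zero
      intro i hi
      simp only [Finset.mem_Icc] at hi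
      rw [Gdef_zero Dt F m k v (l - i) (by omega)]
      simp
  · rintro G' ⟨hd, hi, he⟩
    have main : ∀ d : ℕ, ∀ j : ℤ, k - j ≤ (d : ℤ) → G' j = Gdef Dt F m k v j := by
      intro d
      induction d using Nat.strong_induction_on with
      | _ d IH =>
        intro j hj
        by_cases hjk : j ≤ k
        · have hhigher : ∀ j', j < j' → G' j' = Gdef Dt F m k v j' := by
            intro j' hj'
            by_cases h' : j' ≤ k
            · exact IH (k - j').toNat (by omega) j' (by omega)
            · rw [hd j' (by omega), Gdef_zero Dt F m k v j' (by omega)]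
          have hrec : ∀ n, F m n * G' j (n + m) =
              F m (n + j) * G' j n + cfun Dt F m k G' j n := by
            intro n
            have h := (split_eq Dt F G' m k hm (j + m) (by omega) n).mp (he (j + m) n)
            simp only [add_sub_cancel_right] at h
            exact h
          have hrec2 : ∀ n, F m n * G' j (n + m) =
              F m (n + j) * G' j n + cfun Dt F m k (Gdef Dt F m k v) j n := by
            intro n
            rw [← cfun_congr Dt F m k hm G' (Gdef Dt F m k v) j hhigher n]
            exact hrec n
          have huniq := oneDsol_unique (fun n => F m n) (fun n' => F m (n' + j))
            (cfun Dt F m k (Gdef Dt F m k v) j) m (v j) hm (fun n' => hfm n')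
            (fun n' => hfm (n' + j)) (G' j) (fun n h0 h1 => hi j hjk n h0 h1) hrec2
          rw [huniq, ← Gdef_eq Dt F m k v hm j hjk]
        · rw [hd j (by omega), Gdef_zero Dt F m k v j (by omega)]
    funext j
    exact main (k - j).toNat j (by omega) ▸ rfl
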